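/- Let c ≤ 0 and let μ be a real number with μ² = −4c. On U = {(x,y) ∈ ℝ² : x > 0}, consider the Milne–Pinney vector fields X₁ = (0,−x), X₂ = (−x/2, y/2), X₃ = (y, c/x³) and the vector field Y = (1, y/x + μ/x²). Then the Lie brackets satisfy [X₁,Y] = 0, [X₂,Y] = (1/2)·Y, and [X₃,Y] = −((μ+xy)/x²)·Y on U. Hence the one-dimensional distribution spanned by Y is invariant under the Vessiot–Guldberg Lie algebra of the Milne–Pinney equations, which is therefore imprimitive when c ≤ 0. -/

import Mathlib

namespace Stmt16

/-- Lie bracket of planar vector fields: [X,Y](p) = DY(p)·X(p) − DX(p)·Y(p). -/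
noncomputable def lb (X Y : ℝ × ℝ → ℝ × ℝ) : ℝ × ℝ → ℝ × ℝ :=
  fun p => fderiv ℝ Y p (X p) - fderiv ℝ X p (Y p)

/-- Milne–Pinney vector fields X₁ = −x∂_y, X₂ = ½(y∂_y − x∂ₓ), X₃ = y∂ₓ + (c/x³)∂_y. -/
def X1 : ℝ × ℝ → ℝ × ℝ := fun p => (0, -p.1)
noncomputable def X2 : ℝ × ℝ → ℝ × ℝ := fun p => (-p.1 / 2, p.2 / 2)
noncomputable def X3 (c : ℝ) : ℝ × ℝ → ℝ × ℝ := fun p => (p.2, c / p.1 ^ 3)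

/-- The vector field Y = ∂ₓ + (y/x + μ/x²)∂_y. -/
noncomputable def Y (μ : ℝ) : ℝ × ℝ → ℝ × ℝ :=
  fun p => (1, p.2 / p.1 + μ / p.1 ^ 2)

/-- For c ≤ 0 and μ² = −4c, on {x > 0} one has [X₁,Y] = 0, [X₂,Y] = ½Y and
[X₃,Y] = −((μ+xy)/x²)·Y: the distribution spanned by Y is invariant under the
Vessiot–Guldberg Lie algebra of the Milne–Pinney equations, which is therefore
imprimitive when c ≤ 0. -/
theorem stmt_16 (c μ : ℝ) (hc : c ≤ 0) (hμ : μ ^ 2 = -4 * c) :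
    ∀ p ∈ {p : ℝ × ℝ | p.1 > 0},
      lb X1 (Y μ) p = 0 ∧
      lb X2 (Y μ) p = (1 / 2 : ℝ) • Y μ p ∧
      lb (X3 c) (Y μ) p = (-((μ + p.1 * p.2) / p.1 ^ 2)) • Y μ p := by
  intro p hp
  have hx : p.1 ≠ 0 := ne_of_gt hp
  have hinv : HasFDerivAt (fun q : ℝ × ℝ => (q.1)⁻¹) _ p :=
    (hasDerivAt_inv hx).comp_hasFDerivAt p (hasFDerivAt_fst : HasFDerivAt Prod.fst (ContinuousLinearMap.fst ℝ ℝ ℝ) p)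
  have hk : HasFDerivAt (fun q : ℝ × ℝ => μ / q.1 ^ 2) _ p :=
    (((hasDerivAt_const p.1 μ).div (hasDerivAt_pow 2 p.1)
      (pow_ne_zero 2 hx)).comp_hasFDerivAt p (hasFDerivAt_fst : HasFDerivAt Prod.fst (ContinuousLinearMap.fst ℝ ℝ ℝ) p))
  have hY2 : HasFDerivAt (fun q : ℝ × ℝ => q.2 * (q.1)⁻¹ + μ / q.1 ^ 2) _ p :=
    ((hasFDerivAt_snd : HasFDerivAt Prod.snd (ContinuousLinearMap.snd ℝ ℝ ℝ) p).mul hinv).add hk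
  have hYeq : Y μ = fun q : ℝ × ℝ => (1, q.2 * (q.1)⁻¹ + μ / q.1 ^ 2) := by
    funext q; simp [Y, div_eq_mul_inv]
  have hYf := HasFDerivAt.prodMk (hasFDerivAt_const (𝕜 := ℝ) (1:ℝ) p) hY2
  have hX1 : HasFDerivAt X1 (_ : ℝ × ℝ →L[ℝ] ℝ × ℝ) p :=
    HasFDerivAt.prodMk (hasFDerivAt_const (𝕜 := ℝ) (0:ℝ) p) (hasFDerivAt_fst : HasFDerivAt Prod.fst (ContinuousLinearMap.fst ℝ ℝ ℝ) p).neg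
  have hX2 : HasFDerivAt X2 (_ : ℝ × ℝ →L[ℝ] ℝ × ℝ) p :=
    HasFDerivAt.prodMk (((hasDerivAt_id p.1).neg.div_const 2).comp_hasFDerivAt p (hasFDerivAt_fst : HasFDerivAt Prod.fst (ContinuousLinearMap.fst ℝ ℝ ℝ) p))
      (((hasDerivAt_id p.2).div_const 2).comp_hasFDerivAt p (hasFDerivAt_snd : HasFDerivAt Prod.snd (ContinuousLinearMap.snd ℝ ℝ ℝ) p))
  have hX3 : HasFDerivAt (X3 c) (_ : ℝ × ℝ →L[ℝ] ℝ × ℝ) p :=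
    HasFDerivAt.prodMk (hasFDerivAt_snd : HasFDerivAt Prod.snd (ContinuousLinearMap.snd ℝ ℝ ℝ) p)
      (((hasDerivAt_const p.1 c).div (hasDerivAt_pow 3 p.1)
        (pow_ne_zero 3 hx)).comp_hasFDerivAt p (hasFDerivAt_fst : HasFDerivAt Prod.fst (ContinuousLinearMap.fst ℝ ℝ ℝ) p))
  refine ⟨?_, ?_, ?_⟩
  · simp only [lb, hYeq, hYf.fderiv, hX1.fderiv, X1, Y]
    simp [Prod.ext_iff]
    (try constructor) <;> · field_simp; try ring
  · simp only [lb, hYeq, hYf.fderiv, hX2.fderiv, X2, Y]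
    simp [Prod.ext_iff, Prod.smul_def]
    (try constructor) <;> · field_simp; try ring
  · have hc' : c = -(μ ^ 2) / 4 := by linarith
    subst hc'
    simp only [lb, hYeq, hYf.fderiv, hX3.fderiv, X3, Y]
    simp [Prod.ext_iff, Prod.smul_def]
    (try constructor) <;> · field_simp; try ring


end Stmt16
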